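/- Let R(e₁,n₁;e₂,n₂) be the 4×4 matrix obtained by evaluating R̄ = exp[h(E⊗E + E⊗N + N⊗E)]·(1 − e^{Eh/2}ψ⁺ ⊗ e^{−Eh/2}ψ⁻) in the tensor product of the 2-dimensional U_h(gl(1|1))-modules T^κ_{e₁,n₁} ⊗ T^κ_{e₂,n₂}. Then R̄ intertwines the coproduct and opposite coproduct: R̄·Δ(x) = Δ^{op}(x)·R̄ for the generators x ∈ {E, N, ψ⁺, ψ⁻}, where Δ^{op} = (graded flip)∘Δ. -/

import Mathlib

set_option linter.all false


open Matrix Kronecker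

noncomputable section Uhgl11

abbrev M2 := Matrix (Fin 2) (Fin 2) ℂ

def qψp (e h : ℂ) : M2 := !![0, 2 * Complex.sinh (h * e); 0, 0]
def qψm : M2 := !![0, 0; 1, 0]
def qN (n : ℂ) : M2 := !![n + 1/2, 0; 0, n - 1/2]
def Par2 : M2 := !![1, 0; 0, -1]

/-- The universal R-matrix
`R̄ = exp[h(E⊗E + E⊗N + N⊗E)]·(1 − e^{Eh/2}ψ⁺ ⊗ e^{−Eh/2}ψ⁻)` evaluated on
`T^κ_{e₁,n₁} ⊗ T^κ_{e₂,n₂}` (super tensor signs encoded via the parity operator). -/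
def Rmat (e₁ n₁ e₂ n₂ h : ℂ) : Matrix (Fin 2 × Fin 2) (Fin 2 × Fin 2) ℂ :=
  NormedSpace.exp (h • ((e₁ * e₂) • (1 : Matrix (Fin 2 × Fin 2) (Fin 2 × Fin 2) ℂ)
      + e₁ • ((1 : M2) ⊗ₖ qN n₂) + e₂ • (qN n₁ ⊗ₖ (1 : M2)))) *
    (1 - (Complex.exp (e₁ * h / 2) • (qψp e₁ h * Par2)) ⊗ₖ
          (Complex.exp (-(e₂ * h / 2)) • qψm))

/-- Coproduct of generators on `T^κ_{e₁,n₁} ⊗ T^κ_{e₂,n₂}`. -/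
def Δψp (e₁ e₂ h : ℂ) : Matrix (Fin 2 × Fin 2) (Fin 2 × Fin 2) ℂ :=
  Complex.exp (e₂ * h / 2) • (qψp e₁ h ⊗ₖ (1 : M2))
    + Complex.exp (-(e₁ * h / 2)) • (Par2 ⊗ₖ qψp e₂ h)
def Δψm (e₁ e₂ h : ℂ) : Matrix (Fin 2 × Fin 2) (Fin 2 × Fin 2) ℂ :=
  Complex.exp (e₂ * h / 2) • (qψm ⊗ₖ (1 : M2))
    + Complex.exp (-(e₁ * h / 2)) • (Par2 ⊗ₖ qψm)
def ΔN (n₁ n₂ : ℂ) : Matrix (Fin 2 × Fin 2) (Fin 2 × Fin 2) ℂ :=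
  qN n₁ ⊗ₖ (1 : M2) + (1 : M2) ⊗ₖ qN n₂
def ΔE (e₁ e₂ : ℂ) : Matrix (Fin 2 × Fin 2) (Fin 2 × Fin 2) ℂ := (e₁ + e₂) • 1

/-- Opposite coproduct `Δᵒᵖ = (graded flip)∘Δ` of the odd generators. -/
def Δψpop (e₁ e₂ h : ℂ) : Matrix (Fin 2 × Fin 2) (Fin 2 × Fin 2) ℂ :=
  Complex.exp (-(e₂ * h / 2)) • (qψp e₁ h ⊗ₖ (1 : M2))
    + Complex.exp (e₁ * h / 2) • (Par2 ⊗ₖ qψp e₂ h)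
def Δψmop (e₁ e₂ h : ℂ) : Matrix (Fin 2 × Fin 2) (Fin 2 × Fin 2) ℂ :=
  Complex.exp (-(e₂ * h / 2)) • (qψm ⊗ₖ (1 : M2))
    + Complex.exp (e₁ * h / 2) • (Par2 ⊗ₖ qψm)


set_option maxHeartbeats 4000000 in
private def dargfun (e₁ n₁ e₂ n₂ h : ℂ) : Fin 2 × Fin 2 → ℂ := fun p =>
  h * (e₁ * e₂ + e₁ * (if p.2 = 0 then n₂ + 1/2 else n₂ - 1/2)
      + e₂ * (if p.1 = 0 then n₁ + 1/2 else n₁ - 1/2))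

private lemma exp_part (e₁ n₁ e₂ n₂ h : ℂ) :
    NormedSpace.exp (h • ((e₁ * e₂) • (1 : Matrix (Fin 2 × Fin 2) (Fin 2 × Fin 2) ℂ)
      + e₁ • ((1 : M2) ⊗ₖ qN n₂) + e₂ • (qN n₁ ⊗ₖ (1 : M2))))
    = Matrix.diagonal (fun p => Complex.exp (dargfun e₁ n₁ e₂ n₂ h p)) := by
  have harg : (h • ((e₁ * e₂) • (1 : Matrix (Fin 2 × Fin 2) (Fin 2 × Fin 2) ℂ)
      + e₁ • ((1 : M2) ⊗ₖ qN n₂) + e₂ • (qN n₁ ⊗ₖ (1 : M2))))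
      = Matrix.diagonal (dargfun e₁ n₁ e₂ n₂ h) := by
    ext ⟨i, j⟩ ⟨k, l⟩
    fin_cases i <;> fin_cases j <;> fin_cases k <;> fin_cases l <;>
      simp [dargfun, qN, Matrix.one_apply, Matrix.diagonal, Prod.ext_iff] <;> try ring
  rw [harg, Matrix.exp_diagonal]
  ext p
  simp [Matrix.diagonal, Pi.exp_def, ← Complex.exp_eq_exp_ℂ]

set_option maxHeartbeats 12000000 in
/-- The evaluated universal R-matrix intertwines the coproduct and
the opposite coproduct on the generators: `R̄ Δ(x) = Δᵒᵖ(x) R̄` for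
`x ∈ {E, N, ψ⁺, ψ⁻}` (note `Δᵒᵖ(E) = Δ(E)`, `Δᵒᵖ(N) = Δ(N)`). -/
theorem stmt18 (e₁ n₁ e₂ n₂ h : ℂ) :
    Rmat e₁ n₁ e₂ n₂ h * ΔE e₁ e₂ = ΔE e₁ e₂ * Rmat e₁ n₁ e₂ n₂ h ∧
    Rmat e₁ n₁ e₂ n₂ h * ΔN n₁ n₂ = ΔN n₁ n₂ * Rmat e₁ n₁ e₂ n₂ h ∧
    Rmat e₁ n₁ e₂ n₂ h * Δψp e₁ e₂ h = Δψpop e₁ e₂ h * Rmat e₁ n₁ e₂ n₂ h ∧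
    Rmat e₁ n₁ e₂ n₂ h * Δψm e₁ e₂ h = Δψmop e₁ e₂ h * Rmat e₁ n₁ e₂ n₂ h := by
  have hR : Rmat e₁ n₁ e₂ n₂ h
      = Matrix.diagonal (fun p => Complex.exp (dargfun e₁ n₁ e₂ n₂ h p)) *
        (1 - (Complex.exp (e₁ * h / 2) • (qψp e₁ h * Par2)) ⊗ₖ
          (Complex.exp (-(e₂ * h / 2)) • qψm)) := by
    rw [Rmat, exp_part]
  refine ⟨by simp [ΔE, Matrix.mul_smul, Matrix.smul_mul], ?_, ?_, ?_⟩ <;>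
    rw [hR] <;>
    ext ⟨i, j⟩ ⟨k, l⟩ <;>
    fin_cases i <;> fin_cases j <;> fin_cases k <;> fin_cases l <;>
    (simp only [Matrix.mul_apply, Fintype.sum_prod_type, Fin.sum_univ_two,
      Matrix.diagonal_apply, Matrix.sub_apply, Matrix.one_apply, Matrix.smul_apply,
      Matrix.kroneckerMap_apply, Matrix.add_apply, ΔE, ΔN, Δψp, Δψm, Δψpop, Δψmop, dargfun,
      qψp, qψm, qN, Par2, Prod.mk.injEq, Complex.sinh, Matrix.cons_val', Matrix.cons_val_zero,
      Matrix.cons_val_one, Matrix.head_cons, Matrix.head_fin_const, Matrix.empty_val',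
      Matrix.cons_val_fin_one, smul_eq_mul]
     <;> try norm_num) <;>
    (try ring_nf) <;>
    (try simp only [← Complex.exp_add, ← Complex.exp_nat_mul, Nat.cast_ofNat]) <;>
    (try ring_nf)

end Uhgl11
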